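/- Let F(z) = z²/(2β) − ln cosh z with β > 1. Then F has exactly three critical points: −artanh(m(β)), 0, and artanh(m(β)); z = 0 is a local maximum and ±artanh(m(β)) are the global minima, where m(β) is the unique positive solution of tanh(βx) = x. -/

import Mathlib

/-- `m β` is the largest solution of the Curie-Weiss equation `tanh (β * x) = x`. -/
noncomputable def cwM (β : ℝ) : ℝ := sSup {x : ℝ | Real.tanh (β * x) = x}

/-- The inverse hyperbolic tangent, `artanh x = (1/2) ln ((1+x)/(1−x))`. -/
noncomputable def artanh (x : ℝ) : ℝ := (1 / 2) * Real.log ((1 + x) / (1 - x))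

/-- The function `F z = z² / (2β) − ln (cosh z)`. -/
noncomputable def cwF (β z : ℝ) : ℝ := z ^ 2 / (2 * β) - Real.log (Real.cosh z)

open Real Set


lemma tanh_lt_one' (x : ℝ) : Real.tanh x < 1 := by
  rw [Real.tanh_eq_sinh_div_cosh, div_lt_one (Real.cosh_pos x)]
  nlinarith [Real.cosh_sub_sinh x, Real.exp_pos (-x)]

lemma hasDerivAt_tanh (x : ℝ) : HasDerivAt Real.tanh (1 / Real.cosh x ^ 2) x := by
  have h := ((Real.hasDerivAt_sinh x).div (Real.hasDerivAt_cosh x) (Real.cosh_pos x).ne')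
  have e : (Real.cosh x * Real.cosh x - Real.sinh x * Real.sinh x) / Real.cosh x ^ 2
      = 1 / Real.cosh x ^ 2 := by
    rw [show Real.cosh x * Real.cosh x - Real.sinh x * Real.sinh x
        = Real.cosh x ^ 2 - Real.sinh x ^ 2 by ring, Real.cosh_sq_sub_sinh_sq]
  rw [e] at h
  exact h.congr_of_eventuallyEq (by filter_upwards with y using (Real.tanh_eq_sinh_div_cosh y))

noncomputable def cwG (β z : ℝ) : ℝ := Real.tanh z - z / β

lemma hasDerivAt_cwG (β : ℝ) (hβ : (β:ℝ) ≠ 0) (z : ℝ) :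
    HasDerivAt (cwG β) (1 / Real.cosh z ^ 2 - 1 / β) z := by
  have := (hasDerivAt_tanh z).sub ((hasDerivAt_id z).div_const β)
  exact this

lemma deriv_cwG (β : ℝ) (hβ : (β:ℝ) ≠ 0) (z : ℝ) :
    deriv (cwG β) z = 1 / Real.cosh z ^ 2 - 1 / β :=
  (hasDerivAt_cwG β hβ z).deriv

lemma continuous_tanh' : Continuous Real.tanh :=
  continuous_iff_continuousAt.2 fun x => (hasDerivAt_tanh x).continuousAt

lemma continuous_cwG (β : ℝ) : Continuous (cwG β) :=
  continuous_tanh'.sub (continuous_id.div_const β)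

lemma cwG_concave (β : ℝ) (hβ : (β:ℝ) ≠ 0) : StrictConcaveOn ℝ (Ici 0) (cwG β) := by
  apply StrictAntiOn.strictConcaveOn_of_deriv (convex_Ici 0) (continuous_cwG β).continuousOn
  rw [interior_Ici]
  intro x hx y hy hxy
  rw [deriv_cwG β hβ, deriv_cwG β hβ]
  have hcx : (1:ℝ) ≤ Real.cosh x := Real.one_le_cosh x
  have h2 : Real.cosh x < Real.cosh y :=
    Real.cosh_strictMonoOn (Set.mem_Ici.2 (le_of_lt hx)) (Set.mem_Ici.2 (le_of_lt hy)) hxy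
  have : Real.cosh x ^ 2 < Real.cosh y ^ 2 := by nlinarith
  have hp : (0:ℝ) < Real.cosh x ^ 2 := by positivity
  gcongr

lemma cwG_zero (β : ℝ) : cwG β 0 = 0 := by simp [cwG, Real.tanh_eq_sinh_div_cosh]

lemma cwG_neg (β z : ℝ) : cwG β (-z) = -cwG β z := by
  simp [cwG, Real.tanh_neg, neg_div]; ring

/-- key consequence of strict concavity -/
lemma cwG_key (β : ℝ) (hβ : (β:ℝ) ≠ 0) {p q : ℝ} (hp : 0 < p) (hpq : p < q)
    (hq : 0 ≤ cwG β q) : 0 < cwG β p := by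
  have hq0 : 0 < q := hp.trans hpq
  have ht : p / q ∈ Ioo (0:ℝ) 1 := ⟨by positivity, (div_lt_one hq0).2 hpq⟩
  have := (cwG_concave β hβ).2 (self_mem_Ici (a := (0:ℝ)))
    (show q ∈ Ici (0:ℝ) from le_of_lt hq0) hq0.ne
    (show (0:ℝ) < 1 - p/q by linarith [ht.2]) ht.1 (by ring)
  have he : (1 - p/q) • (0:ℝ) + (p/q) • q = p := by
    rw [smul_zero, zero_add, smul_eq_mul, div_mul_cancel₀ p hq0.ne']
  rw [he] at this
  have : (p/q) * cwG β q < cwG β p := by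
    simpa [cwG_zero, smul_eq_mul] using this
  nlinarith [ht.1]

lemma exists_pos_root (β : ℝ) (hβ : 1 < β) :
    ∃ a : ℝ, 0 < a ∧ cwG β a = 0 := by
  have hβ0 : (0:ℝ) < β := by linarith
  -- small z0 with cwG β z0 > 0
  have hd : HasDerivAt (cwG β) (1 - 1/β) 0 := by
    have := hasDerivAt_cwG β hβ0.ne' 0
    simpa [Real.cosh_zero] using this
  have hslope := hasDerivAt_iff_tendsto_slope.1 hd
  have hpos : (0:ℝ) < 1 - 1/β := by
    have : 1/β < 1 := by rw [div_lt_one hβ0]; exact hβ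
    linarith
  have hev : ∀ᶠ z in nhdsWithin 0 {(0:ℝ)}ᶜ, 0 < slope (cwG β) 0 z :=
    hslope.eventually (eventually_gt_nhds hpos)
  have hev2 : ∀ᶠ z in nhdsWithin (0:ℝ) (Ioi 0), 0 < slope (cwG β) 0 z := by
    apply hev.filter_mono
    apply nhdsWithin_mono
    intro x hx
    exact ne_of_gt hx
  have hev3 : ∀ᶠ z in nhdsWithin (0:ℝ) (Ioi 0), z < 1 := by
    apply eventually_nhdsWithin_of_eventually_nhds
    exact eventually_lt_nhds one_pos
  obtain ⟨z0, ⟨hz0s, hz0lt⟩, hz0pos⟩ :=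
    ((hev2.and hev3).and self_mem_nhdsWithin).exists
  have hz0 : 0 < z0 := hz0pos
  have hG0 : 0 < cwG β z0 := by
    have : 0 < slope (cwG β) 0 z0 := hz0s
    rw [slope_def_field, cwG_zero] at this
    have := mul_pos this hz0
    field_simp at this
    -- this : 0 < cwG β z0  (after simp)
    nlinarith [this, hz0]
  -- G (β+1) < 0
  have hGb : cwG β (β+1) < 0 := by
    have h1 : Real.tanh (β+1) < 1 := tanh_lt_one' _
    have : (1:ℝ) < (β+1)/β := by
      rw [lt_div_iff₀ hβ0]; linarith
    simp only [cwG]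
    linarith
  have hle : z0 ≤ β + 1 := by linarith
  obtain ⟨a, ha, hGa⟩ := intermediate_value_Icc' hle (continuous_cwG β).continuousOn
    (show (0:ℝ) ∈ Icc (cwG β (β+1)) (cwG β z0) from ⟨le_of_lt hGb, le_of_lt hG0⟩)
  refine ⟨a, lt_of_lt_of_le hz0 ha.1, hGa⟩

section Main
variable {β : ℝ} (hβ : 1 < β)

lemma root_unique (hβ : 1 < β) {x y : ℝ} (hx : 0 < x) (hy : 0 < y)
    (hgx : cwG β x = 0) (hgy : cwG β y = 0) : x = y := by
  have hβ0 : (β:ℝ) ≠ 0 := by positivity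
  rcases lt_trichotomy x y with h | h | h
  · exact absurd hgx (ne_of_gt (cwG_key β hβ0 hx h hgy.ge))
  · exact h
  · exact absurd hgy (ne_of_gt (cwG_key β hβ0 hy h hgx.ge))

lemma cwG_pos_of_lt (hβ : 1 < β) {a z : ℝ} (ha : cwG β a = 0) (hz : 0 < z) (hza : z < a) :
    0 < cwG β z :=
  cwG_key β (by positivity) hz hza ha.ge

lemma cwG_neg_of_gt (hβ : 1 < β) {a z : ℝ} (h0 : 0 < a) (ha : cwG β a = 0) (hza : a < z) :
    cwG β z < 0 := by
  by_contra h
  push_neg at h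
  exact absurd ha (ne_of_gt (cwG_key β (by positivity) h0 hza h))

lemma artanh_tanh (z : ℝ) : _root_.artanh (Real.tanh z) = z := by
  have hc := Real.cosh_pos z
  have h1 : 1 + Real.tanh z = Real.exp z / Real.cosh z := by
    rw [Real.tanh_eq_sinh_div_cosh, ← Real.cosh_add_sinh]
    field_simp
  have h2 : 1 - Real.tanh z = Real.exp (-z) / Real.cosh z := by
    rw [Real.tanh_eq_sinh_div_cosh, ← Real.cosh_sub_sinh]
    field_simp
  rw [_root_.artanh, h1, h2]
  have he : Real.exp z / Real.cosh z / (Real.exp (-z) / Real.cosh z) = Real.exp (z - -z) := by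
    rw [Real.exp_sub]; field_simp
  rw [he, Real.log_exp]
  ring

lemma cwM_eq (hβ : 1 < β) : ∃ a : ℝ, 0 < a ∧ cwG β a = 0 ∧ cwM β = Real.tanh a ∧
    _root_.artanh (cwM β) = a := by
  obtain ⟨a, ha0, hGa⟩ := exists_pos_root β hβ
  have hβ0 : (0:ℝ) < β := by linarith
  have hma : Real.tanh a = a / β := by
    have := hGa; simp [cwG] at this; linarith
  have hcwM : cwM β = Real.tanh a := by
    have hmem : Real.tanh a ∈ {x : ℝ | Real.tanh (β * x) = x} := by
      simp only [mem_setOf_eq, hma]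
      rw [mul_div_cancel₀ _ hβ0.ne']
      exact hma
    have hub : ∀ x ∈ {x : ℝ | Real.tanh (β * x) = x}, x ≤ Real.tanh a := by
      intro x hx
      simp only [mem_setOf_eq] at hx
      rcases le_or_gt x 0 with h | h
      · have : 0 < Real.tanh a := by
          rw [hma]; positivity
        linarith
      · have hGx : cwG β (β * x) = 0 := by
          simp [cwG, hx]
          field_simp
          ring
        have hbx : 0 < β * x := by positivity
        have := root_unique hβ hbx ha0 hGx hGa
        rw [← this, hx]
    rw [cwM]
    exact (IsGreatest.csSup_eq ⟨hmem, hub⟩)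
  exact ⟨a, ha0, hGa, hcwM, by rw [hcwM, _root_.artanh_tanh]⟩
end Main

lemma hasDerivAt_cwF (β : ℝ) (hβ0 : (β:ℝ) ≠ 0) (z : ℝ) :
    HasDerivAt (cwF β) (-(cwG β z)) z := by
  have h1 : HasDerivAt (fun z : ℝ => z ^ 2 / (2 * β)) (z / β) z := by
    have := (hasDerivAt_pow 2 z).div_const (2 * β)
    refine this.congr_deriv ?_
    field_simp
    ring
  have h2 : HasDerivAt (fun z : ℝ => Real.log (Real.cosh z)) (Real.tanh z) z := by
    have := (Real.hasDerivAt_cosh z).log (Real.cosh_pos z).ne'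
    rw [← Real.tanh_eq_sinh_div_cosh] at this
    exact this
  have := h1.sub h2
  refine this.congr_deriv ?_
  simp only [cwG]; ring

lemma deriv_cwF (β : ℝ) (hβ0 : (β:ℝ) ≠ 0) (z : ℝ) :
    deriv (cwF β) z = -(cwG β z) := (hasDerivAt_cwF β hβ0 z).deriv

lemma cwF_even (β z : ℝ) : cwF β (-z) = cwF β z := by
  simp [cwF, Real.cosh_neg]

lemma continuous_cwF (β : ℝ) : Continuous (cwF β) := by
  apply Continuous.sub
  · exact (continuous_pow 2).div_const _
  · exact Real.continuous_cosh.log (fun x => (Real.cosh_pos x).ne')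

lemma cwF_anti (hβ : 1 < β) {a : ℝ} (ha0 : 0 < a) (hGa : cwG β a = 0) :
    StrictAntiOn (cwF β) (Icc 0 a) := by
  apply strictAntiOn_of_deriv_neg (convex_Icc 0 a) (continuous_cwF β).continuousOn
  intro x hx
  rw [interior_Icc] at hx
  rw [deriv_cwF β (by positivity)]
  simpa using cwG_pos_of_lt hβ hGa hx.1 hx.2

lemma cwF_mono (hβ : 1 < β) {a : ℝ} (ha0 : 0 < a) (hGa : cwG β a = 0) :
    StrictMonoOn (cwF β) (Ici a) := by
  apply strictMonoOn_of_deriv_pos (convex_Ici a) (continuous_cwF β).continuousOn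
  intro x hx
  rw [interior_Ici] at hx
  rw [deriv_cwF β (by positivity)]
  simpa using cwG_neg_of_gt hβ ha0 hGa hx

theorem stmt_6 (β : ℝ) (hβ : 1 < β) :
    {z : ℝ | deriv (cwF β) z = 0}
        = {-_root_.artanh (cwM β), 0, _root_.artanh (cwM β)} ∧
      IsLocalMax (cwF β) 0 ∧
      (∀ z : ℝ, cwF β (_root_.artanh (cwM β)) ≤ cwF β z) ∧
      cwF β (-_root_.artanh (cwM β)) = cwF β (_root_.artanh (cwM β)) := by
  obtain ⟨a, ha0, hGa, hcwM, hart⟩ := cwM_eq hβ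
  have hβ0 : (0:ℝ) < β := by linarith
  rw [hart]
  refine ⟨?_, ?_, ?_, cwF_even β a⟩
  · ext z
    simp only [mem_setOf_eq, deriv_cwF β hβ0.ne', neg_eq_zero, mem_insert_iff,
      mem_singleton_iff]
    constructor
    · intro hz
      rcases lt_trichotomy z 0 with h | h | h
      · left
        have hgz : cwG β (-z) = 0 := by rw [cwG_neg, hz, neg_zero]
        have := root_unique hβ (by linarith) ha0 hgz hGa
        linarith
      · right; left; exact h
      · right; right; exact root_unique hβ h ha0 hz hGa
    · rintro (rfl | rfl | rfl)
      · rw [cwG_neg, hGa, neg_zero]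
      · exact cwG_zero β
      · exact hGa
  · have hmem : Ioo (-a) a ∈ nhds (0:ℝ) := Ioo_mem_nhds (neg_lt_zero.2 ha0) ha0
    have key : ∀ w : ℝ, 0 ≤ w → w < a → cwF β w ≤ cwF β 0 := by
      intro w hw hwa
      rcases eq_or_lt_of_le hw with h | h
      · rw [← h]
      · exact (cwF_anti hβ ha0 hGa ⟨le_refl 0, ha0.le⟩ ⟨hw, hwa.le⟩ h).le
    filter_upwards [hmem] with z hz
    rcases le_or_gt 0 z with h | h
    · exact key z h hz.2
    · rw [← cwF_even β z]
      exact key (-z) (by linarith) (by linarith [hz.1])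
  · have key : ∀ w : ℝ, 0 ≤ w → cwF β a ≤ cwF β w := by
      intro w hw
      rcases lt_trichotomy w a with h | h | h
      · exact (cwF_anti hβ ha0 hGa ⟨hw, h.le⟩ ⟨ha0.le, le_refl a⟩ h).le
      · rw [h]
      · exact (cwF_mono hβ ha0 hGa self_mem_Ici h.le h).le
    intro z
    rcases le_or_gt 0 z with h | h
    · exact key z h
    · rw [← cwF_even β z]
      exact key (-z) (by linarith)
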